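/- Let V ∈ ℝ^{N×R} and V̂ ∈ ℝ^{N×r} both have orthonormal columns (VᵀV = I_R, V̂ᵀV̂ = I_r), and suppose the spectral norm bound ‖(I − VVᵀ) V̂‖₂ ≤ ε holds. Then for every n ∈ ℝ^N with ‖n − V̂(V̂ᵀ n)‖₂ ≤ η one has ‖n − V(Vᵀ n)‖₂ ≤ η + ε ‖n‖₂; that is, if the current basis V captures the new window basis V̂ to accuracy ε, then V approximates every vector that V̂ approximates, up to the additional error ε‖n‖₂. -/
import Mathlib
open Matrix

-- Pythagoras for orthonormal-column matrices
lemma key_identity {a b : ℕ} (M : Matrix (Fin a) (Fin b) ℝ) (hM : Mᵀ * M = 1)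
    (x : Fin a → ℝ) :
    ∑ i, (x i - M.mulVec (Mᵀ.mulVec x) i) ^ 2
      = ∑ i, (x i) ^ 2 - ∑ α, ((Mᵀ.mulVec x) α) ^ 2 := by
  set y := Mᵀ.mulVec x with hy
  have h1 : x ⬝ᵥ (M *ᵥ y) = y ⬝ᵥ y := by
    rw [Matrix.dotProduct_mulVec, ← Matrix.mulVec_transpose]
  have h2 : (M *ᵥ y) ⬝ᵥ (M *ᵥ y) = y ⬝ᵥ y := by
    rw [Matrix.dotProduct_mulVec, ← Matrix.mulVec_transpose, Matrix.mulVec_mulVec, hM,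
      Matrix.one_mulVec]
  have hexp : ∑ i, (x i - (M *ᵥ y) i) ^ 2
      = ∑ i, (x i)^2 - 2 * (x ⬝ᵥ (M *ᵥ y)) + (M *ᵥ y) ⬝ᵥ (M *ᵥ y) := by
    simp only [dotProduct, Finset.mul_sum, ← Finset.sum_add_distrib, ← Finset.sum_sub_distrib]
    apply Finset.sum_congr rfl
    intro i _
    ring
  have hysq : y ⬝ᵥ y = ∑ α, (y α) ^ 2 := by
    simp [dotProduct, sq]
  rw [hexp, h1, h2, hysq]
  ring

lemma sqrt_sum_sq_eq_norm {m : ℕ} (x : Fin m → ℝ) :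
    Real.sqrt (∑ i, (x i) ^ 2) = ‖(WithLp.equiv 2 (Fin m → ℝ)).symm x‖ := by
  rw [EuclideanSpace.norm_eq]
  simp [sq_abs]

lemma sqrt_sum_sq_add_le {m : ℕ} (u v : Fin m → ℝ) :
    Real.sqrt (∑ i, (u i + v i) ^ 2)
      ≤ Real.sqrt (∑ i, (u i) ^ 2) + Real.sqrt (∑ i, (v i) ^ 2) := by
  have h := norm_add_le ((WithLp.equiv 2 (Fin m → ℝ)).symm u)
    ((WithLp.equiv 2 (Fin m → ℝ)).symm v)
  rw [← sqrt_sum_sq_eq_norm, ← sqrt_sum_sq_eq_norm] at h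
  refine le_trans (le_of_eq ?_) h
  rw [sqrt_sum_sq_eq_norm]
  congr 1

/-- If the current basis `V` captures the new window basis `V̂` to spectral-norm
accuracy `ε` (expressed via the operator characterization
`‖(I − VVᵀ)V̂ y‖₂ ≤ ε ‖y‖₂` for all `y`), then `V` approximates, up to the
additional error `ε‖n‖₂`, every vector that `V̂` approximates. -/
theorem basis_capture_implies_approximation
    (N R r : ℕ) (V : Matrix (Fin N) (Fin R) ℝ) (hV : Vᵀ * V = 1)
    (Vhat : Matrix (Fin N) (Fin r) ℝ) (hVhat : Vhatᵀ * Vhat = 1)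
    (ε η : ℝ) (hε : 0 ≤ ε) (hη : 0 ≤ η)
    (hproj : ∀ y : Fin r → ℝ,
      Real.sqrt (∑ i, (((1 - V * Vᵀ) * Vhat).mulVec y i) ^ 2)
        ≤ ε * Real.sqrt (∑ α, (y α) ^ 2)) :
    ∀ n : Fin N → ℝ,
      Real.sqrt (∑ i, (n i - Vhat.mulVec (Vhatᵀ.mulVec n) i) ^ 2) ≤ η →
      Real.sqrt (∑ i, (n i - V.mulVec (Vᵀ.mulVec n) i) ^ 2)
        ≤ η + ε * Real.sqrt (∑ i, (n i) ^ 2) := by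
  intro n hn
  -- u : residual of Vhat, decomposition pieces a, b
  set u : Fin N → ℝ := fun i => n i - Vhat.mulVec (Vhatᵀ.mulVec n) i with hu
  set a : Fin N → ℝ := fun i => u i - V.mulVec (Vᵀ.mulVec u) i with ha
  set b : Fin N → ℝ := ((1 - V * Vᵀ) * Vhat).mulVec (Vhatᵀ.mulVec n) with hb
  have hu2 : u = n - (Vhat * Vhatᵀ) *ᵥ n := by
    funext j; simp [hu, Matrix.mulVec_mulVec]
  have hm : ((1 - V * Vᵀ) * Vhat) * Vhatᵀ
      = Vhat * Vhatᵀ - (V * Vᵀ) * (Vhat * Vhatᵀ) := by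
    simp only [Matrix.sub_mul, Matrix.one_mul, Matrix.mul_assoc]
  have hdecomp : ∀ i, n i - V.mulVec (Vᵀ.mulVec n) i = a i + b i := by
    intro i
    simp only [ha, hb, hu2, Matrix.mulVec_mulVec, hm, Matrix.sub_mulVec,
      Matrix.mulVec_sub, Pi.sub_apply, Matrix.mul_assoc]
    ring
  have step1 : Real.sqrt (∑ i, (n i - V.mulVec (Vᵀ.mulVec n) i) ^ 2)
      ≤ Real.sqrt (∑ i, (a i) ^ 2) + Real.sqrt (∑ i, (b i) ^ 2) := by
    calc Real.sqrt (∑ i, (n i - V.mulVec (Vᵀ.mulVec n) i) ^ 2)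
        = Real.sqrt (∑ i, (a i + b i) ^ 2) := by
          congr 1; exact Finset.sum_congr rfl fun i _ => by rw [hdecomp i]
      _ ≤ _ := sqrt_sum_sq_add_le a b
  have hA : Real.sqrt (∑ i, (a i) ^ 2) ≤ η := by
    have hle : ∑ i, (a i) ^ 2 ≤ ∑ i, (u i) ^ 2 := by
      rw [ha]
      rw [key_identity V hV u]
      have : 0 ≤ ∑ α, ((Vᵀ.mulVec u) α) ^ 2 := Finset.sum_nonneg fun _ _ => sq_nonneg _
      linarith
    exact le_trans (Real.sqrt_le_sqrt hle) hn
  have hB : Real.sqrt (∑ i, (b i) ^ 2) ≤ ε * Real.sqrt (∑ i, (n i) ^ 2) := by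
    refine le_trans (hproj (Vhatᵀ.mulVec n)) ?_
    apply mul_le_mul_of_nonneg_left _ hε
    apply Real.sqrt_le_sqrt
    have := key_identity Vhat hVhat n
    have h0 : 0 ≤ ∑ i, (n i - Vhat.mulVec (Vhatᵀ.mulVec n) i) ^ 2 :=
      Finset.sum_nonneg fun _ _ => sq_nonneg _
    linarith
  linarith
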